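/- Let n ≥ k ≥ 1 and let 0 < ε < 1. If T ≥ ln((1/ε)·C(n,k))·(k^k/k!), then choosing T independent uniformly random functions f_1,...,f_T from [n] to [k], the probability that for every k-element subset A of [n] some f_t is injective on A is at least 1 − ε. -/

import Mathlib

set_option maxHeartbeats 1000000

open Finset

lemma inj_count {n k : ℕ} (A : Finset (Fin n)) (hA : A.card = k) :
    (Finset.univ.filter (fun f : Fin n → Fin k => Set.InjOn f (A : Set (Fin n)))).card
      = Nat.factorial k * k ^ (n - k) := by
  classical
  rw [← Fintype.card_subtype]
  have e1 : {f : Fin n → Fin k // Set.InjOn f (A : Set (Fin n))} ≃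
      {p : ({x : Fin n // x ∈ A} → Fin k) × ({x : Fin n // ¬ x ∈ A} → Fin k) //
        Function.Injective p.1} :=
    Equiv.subtypeEquiv (Equiv.piEquivPiSubtypeProd (fun x => x ∈ A) (fun _ => Fin k))
      (fun f => by
        rw [Set.injOn_iff_injective]
        exact Iff.rfl)
  have e3 := (e1.trans Equiv.prodSubtypeFstEquivSubtypeProd).trans
    (Equiv.prodCongr (Equiv.subtypeInjectiveEquivEmbedding _ _) (Equiv.refl _))
  rw [Fintype.card_congr e3, Fintype.card_prod, Fintype.card_embedding_eq, Fintype.card_fun]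
  have hcA : Fintype.card {x : Fin n // x ∈ A} = k := by
    simpa [Fintype.card_coe] using hA
  have hcA' : Fintype.card {x : Fin n // ¬ x ∈ A} = n - k := by
    rw [Fintype.card_subtype_compl, hcA, Fintype.card_fin]
  rw [hcA, hcA', Fintype.card_fin, Nat.descFactorial_self]

lemma badA_count {n k T : ℕ} (A : Finset (Fin n)) :
    (Finset.univ.filter (fun F : Fin T → Fin n → Fin k =>
        ∀ t, ¬ Set.InjOn (F t) (A : Set (Fin n)))).card
      = ((Finset.univ.filter
          (fun f : Fin n → Fin k => ¬ Set.InjOn f (A : Set (Fin n)))).card) ^ T := by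
  classical
  have : (Finset.univ.filter (fun F : Fin T → Fin n → Fin k =>
        ∀ t, ¬ Set.InjOn (F t) (A : Set (Fin n))))
      = Fintype.piFinset (fun _ : Fin T =>
          Finset.univ.filter (fun f : Fin n → Fin k => ¬ Set.InjOn f (A : Set (Fin n)))) := by
    ext F
    simp [Fintype.mem_piFinset]
  rw [this, Fintype.card_piFinset]
  simp

/-- If T ≥ ln((1/ε)·C(n,k))·(k^k/k!), then T independent uniform random functions
[n] → [k] form a perfect hash family for size-k subsets with probability ≥ 1 − ε. -/
theorem stmt1 (n k T : ℕ) (hk : 1 ≤ k) (hkn : k ≤ n) (ε : ℝ) (hε0 : 0 < ε) (hε1 : ε < 1)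
    (hT : (T : ℝ) ≥ Real.log ((1 / ε) * (Nat.choose n k : ℝ)) *
      ((k : ℝ) ^ k / (Nat.factorial k : ℝ))) :
    ((Finset.univ.filter (fun F : Fin T → Fin n → Fin k =>
        ∀ A : Finset (Fin n), A.card = k → ∃ t : Fin T,
          Set.InjOn (F t) (A : Set (Fin n)))).card : ℝ)
      / (((k : ℝ) ^ n) ^ T) ≥ 1 - ε := by
  set good := Finset.univ.filter (fun F : Fin T → Fin n → Fin k =>
        ∀ A : Finset (Fin n), A.card = k → ∃ t : Fin T,
          Set.InjOn (F t) (A : Set (Fin n))) with hgood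
  set bad := Finset.univ.filter (fun F : Fin T → Fin n → Fin k =>
        ¬ ∀ A : Finset (Fin n), A.card = k → ∃ t : Fin T,
          Set.InjOn (F t) (A : Set (Fin n))) with hbad
  -- counting constants
  clear_value good bad
  obtain ⟨M, hM⟩ : ∃ M, M = Nat.factorial k * k ^ (n - k) := ⟨_, rfl⟩
  have hknpow : k ^ n = k ^ k * k ^ (n - k) := by
    rw [← pow_add, Nat.add_sub_cancel' hkn]
  have hMle : M ≤ k ^ n := by
    rw [hknpow, hM]
    exact Nat.mul_le_mul_right _ (Nat.factorial_le_pow k)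
  -- union bound
  have hsubset : bad ⊆ (Finset.powersetCard k (Finset.univ : Finset (Fin n))).biUnion (fun A =>
      Finset.univ.filter (fun F : Fin T → Fin n → Fin k =>
        ∀ t, ¬ Set.InjOn (F t) (A : Set (Fin n)))) := by
    intro F hF
    simp only [hbad, Finset.mem_filter, Finset.mem_univ, true_and] at hF
    push_neg at hF
    obtain ⟨A, hA, hAF⟩ := hF
    simp only [Finset.mem_biUnion, Finset.mem_powersetCard, Finset.mem_filter, Finset.mem_univ,
      true_and]
    exact ⟨A, ⟨Finset.subset_univ _, hA⟩, hAF⟩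
  have hbadcard : bad.card ≤ Nat.choose n k * (k ^ n - M) ^ T := by
    have h1 := Finset.card_le_card hsubset
    have h2 := Finset.card_biUnion_le (s := Finset.powersetCard k (Finset.univ : Finset (Fin n)))
      (t := fun A => Finset.univ.filter (fun F : Fin T → Fin n → Fin k =>
        ∀ t, ¬ Set.InjOn (F t) (A : Set (Fin n))))
    have key : ∀ A ∈ Finset.powersetCard k (Finset.univ : Finset (Fin n)),
        (Finset.univ.filter (fun F : Fin T → Fin n → Fin k =>
          ∀ t, ¬ Set.InjOn (F t) (A : Set (Fin n)))).card = (k ^ n - M) ^ T := by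
      intro A hA
      rw [Finset.mem_powersetCard] at hA
      rw [badA_count]
      congr 1
      have h4 := Finset.card_filter_add_card_filter_not
        (s := (Finset.univ : Finset (Fin n → Fin k)))
        (p := fun f => Set.InjOn f (A : Set (Fin n)))
      rw [inj_count A hA.2, ← hM, Finset.card_univ, Fintype.card_fun, Fintype.card_fin,
        Fintype.card_fin] at h4
      clear h1 h2 hsubset
      omega
    have h3 := Finset.sum_congr rfl key
    rw [Finset.sum_const, Finset.card_powersetCard, Finset.card_univ, Fintype.card_fin,
      smul_eq_mul] at h3
    exact h1.trans (h2.trans (le_of_eq h3))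
  -- totals
  have htotal : good.card + bad.card = (k ^ n) ^ T := by
    have := Finset.card_filter_add_card_filter_not
      (s := (Finset.univ : Finset (Fin T → Fin n → Fin k)))
      (p := fun F => ∀ A : Finset (Fin n), A.card = k → ∃ t : Fin T,
        Set.InjOn (F t) (A : Set (Fin n)))
    rw [Finset.card_univ, Fintype.card_fun, Fintype.card_fun, Fintype.card_fin,
      Fintype.card_fin, Fintype.card_fin] at this
    rw [hgood, hbad]
    exact this
  -- real analysis
  have hk0 : (0:ℝ) < (k:ℝ) := by exact_mod_cast hk
  have hkn0 : (0:ℝ) < (k:ℝ) ^ n := pow_pos hk0 n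
  have hD0 : (0:ℝ) < ((k:ℝ) ^ n) ^ T := pow_pos hkn0 T
  have hC0 : (0:ℝ) < (Nat.choose n k : ℝ) := by
    exact_mod_cast Nat.choose_pos hkn
  have hfact0 : (0:ℝ) < (Nat.factorial k : ℝ) := by exact_mod_cast Nat.factorial_pos k
  set p : ℝ := (Nat.factorial k : ℝ) / (k:ℝ) ^ k with hp
  have hp0 : 0 < p := div_pos hfact0 (pow_pos hk0 k)
  have hp1 : p ≤ 1 := by
    rw [div_le_one (pow_pos hk0 k)]
    exact_mod_cast Nat.factorial_le_pow k
  have hCε : (0:ℝ) < (Nat.choose n k : ℝ) / ε := div_pos hC0 hε0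
  have hpT : Real.log ((Nat.choose n k : ℝ) / ε) ≤ p * T := by
    have h1 : Real.log ((1 / ε) * (Nat.choose n k : ℝ)) = Real.log ((Nat.choose n k : ℝ) / ε) := by
      ring_nf
    rw [h1] at hT
    have h2 : Real.log ((Nat.choose n k : ℝ) / ε) * ((k:ℝ) ^ k / (Nat.factorial k : ℝ)) * p
        = Real.log ((Nat.choose n k : ℝ) / ε) := by
      rw [hp]; field_simp [hk0.ne', hfact0.ne']
    calc Real.log ((Nat.choose n k : ℝ) / ε)
        = Real.log ((Nat.choose n k : ℝ) / ε) * ((k:ℝ) ^ k / (Nat.factorial k : ℝ)) * p := h2.symm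
      _ ≤ (T:ℝ) * p := by
          apply mul_le_mul_of_nonneg_right hT (le_of_lt hp0)
      _ = p * T := mul_comm _ _
  have hexp : (1 - p) ^ T ≤ ε / (Nat.choose n k : ℝ) := by
    have h1 : (1 - p) ≤ Real.exp (-p) := by
      have := Real.add_one_le_exp (-p)
      linarith
    calc (1 - p) ^ T ≤ (Real.exp (-p)) ^ T := by
          apply pow_le_pow_left₀ (by linarith) h1
      _ = Real.exp (-(p * T)) := by
          rw [← Real.exp_nat_mul]; ring_nf
      _ ≤ Real.exp (-(Real.log ((Nat.choose n k : ℝ) / ε))) := by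
          apply Real.exp_le_exp.mpr; linarith
      _ = ε / (Nat.choose n k : ℝ) := by
          rw [Real.exp_neg, Real.exp_log hCε, inv_div]
  -- convert good/D
  have hcast : ((k:ℝ) ^ n) ^ T = (((k ^ n) ^ T : ℕ) : ℝ) := by push_cast; ring
  have hratio : (((k ^ n - M : ℕ)) : ℝ) = (1 - p) * (k:ℝ) ^ n := by
    have : (((k ^ n - M : ℕ)) : ℝ) = ((k:ℝ) ^ n) - (M:ℝ) := by
      have := hMle
      push_cast [Nat.cast_sub hMle]
      ring
    rw [this]
    have hMr : (M:ℝ) = p * (k:ℝ) ^ n := by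
      rw [hp, hM]
      have : ((k:ℝ)) ^ n = (k:ℝ) ^ k * (k:ℝ) ^ (n - k) := by
        rw [← pow_add, Nat.add_sub_cancel' hkn]
      rw [this]
      push_cast
      field_simp
    rw [hMr]; ring
  have hbadR : (bad.card : ℝ) ≤ ε * ((k:ℝ) ^ n) ^ T := by
    calc (bad.card : ℝ) ≤ (Nat.choose n k : ℝ) * (((k ^ n - M : ℕ)) : ℝ) ^ T := by
          exact_mod_cast hbadcard
      _ = (Nat.choose n k : ℝ) * ((1 - p) ^ T * (((k:ℝ) ^ n) ^ T)) := by
          rw [hratio, mul_pow]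
      _ ≤ (Nat.choose n k : ℝ) * ((ε / (Nat.choose n k : ℝ)) * (((k:ℝ) ^ n) ^ T)) := by
          apply mul_le_mul_of_nonneg_left _ (le_of_lt hC0)
          apply mul_le_mul_of_nonneg_right hexp (le_of_lt hD0)
      _ = ε * ((k:ℝ) ^ n) ^ T := by field_simp
  have hgoodR : (good.card : ℝ) = ((k:ℝ) ^ n) ^ T - (bad.card : ℝ) := by
    rw [hcast]
    have : (good.card : ℝ) + (bad.card : ℝ) = (((k ^ n) ^ T : ℕ) : ℝ) := by
      exact_mod_cast htotal
    linarith
  rw [ge_iff_le, le_div_iff₀ hD0, hgoodR]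
  nlinarith [hbadR, hD0]
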